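/- Let p, q be coprime integers with q positive. Then V(p,q) = −(2/π) ∑_{k=1}^{q−1} B₁(kp/q)·ψ(k/q), where V(p,q) = ∑_{k=1}^{q−1} {kp/q} cot(kπ/q) is the Vasyunin sum, B₁ the first Bernoulli function and ψ the digamma function. -/

import Mathlib

open Classical in
/-- The first Bernoulli function. -/
noncomputable def B1 (y : ℝ) : ℝ := if ∃ n : ℤ, y = n then 0 else Int.fract y - 1 / 2

/-- The digamma function `ψ = Γ'/Γ`, as the derivative of `log Γ`. -/
noncomputable def digamma (x : ℝ) : ℝ := deriv (fun y => Real.log (Real.Gamma y)) x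

lemma hasDerivAt_logGamma {x : ℝ} (hx : 0 < x) :
    HasDerivAt (fun y => Real.log (Real.Gamma y)) (digamma x) x := by
  have hd : DifferentiableAt ℝ (fun y => Real.log (Real.Gamma y)) x := by
    refine (Real.differentiableAt_Gamma fun m => ?_).log (Real.Gamma_pos_of_pos hx).ne'
    have : (0:ℝ) ≤ m := Nat.cast_nonneg m
    intro h; rw [h] at hx; linarith
  exact hd.hasDerivAt

lemma digamma_reflect {x : ℝ} (h0 : 0 < x) (h1 : x < 1) :
    digamma (1 - x) = digamma x + Real.pi * Real.cot (Real.pi * x) := by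
  have hπ := Real.pi_pos
  have hsin : 0 < Real.sin (Real.pi * x) :=
    Real.sin_pos_of_pos_of_lt_pi (by positivity) (by nlinarith)
  have hf1 := hasDerivAt_logGamma h0
  have hf2 : HasDerivAt (fun y => Real.log (Real.Gamma (1 - y))) (-digamma (1 - x)) x := by
    have h := (hasDerivAt_logGamma (x := 1 - x) (by linarith)).comp x
      ((hasDerivAt_id x).const_sub 1)
    simpa [Function.comp_def] using h
  have hF : HasDerivAt (fun y => Real.log (Real.Gamma y) + Real.log (Real.Gamma (1 - y)))
      (digamma x - digamma (1 - x)) x := by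
    simpa [sub_eq_add_neg, Pi.add_def] using hf1.add hf2
  have hsin' : HasDerivAt (fun y => Real.sin (Real.pi * y))
      (Real.cos (Real.pi * x) * Real.pi) x := by
    simpa [Function.comp_def] using (Real.hasDerivAt_sin (Real.pi * x)).comp x ((hasDerivAt_id x).const_mul Real.pi)
  have hG : HasDerivAt (fun y => Real.log Real.pi - Real.log (Real.sin (Real.pi * y)))
      (-(Real.pi * Real.cos (Real.pi * x) / Real.sin (Real.pi * x))) x := by
    have h := (hsin'.log hsin.ne').const_sub (Real.log Real.pi)
    exact h.congr_deriv (by ring)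
  have heq : (fun y => Real.log (Real.Gamma y) + Real.log (Real.Gamma (1 - y))) =ᶠ[nhds x]
      (fun y => Real.log Real.pi - Real.log (Real.sin (Real.pi * y))) := by
    filter_upwards [Ioo_mem_nhds h0 h1] with y hy
    have hy0 := hy.1
    have hy1 := hy.2
    have hs : 0 < Real.sin (Real.pi * y) :=
      Real.sin_pos_of_pos_of_lt_pi (by positivity) (by nlinarith)
    have hΓ1 : 0 < Real.Gamma y := Real.Gamma_pos_of_pos hy0
    have hΓ2 : 0 < Real.Gamma (1 - y) := Real.Gamma_pos_of_pos (by linarith)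
    rw [← Real.log_mul hΓ1.ne' hΓ2.ne', Real.Gamma_mul_Gamma_one_sub y,
      Real.log_div Real.pi_pos.ne' hs.ne']
  have hF' : HasDerivAt (fun y => Real.log Real.pi - Real.log (Real.sin (Real.pi * y)))
      (digamma x - digamma (1 - x)) x := hF.congr_of_eventuallyEq heq.symm
  have huniq := hF'.unique hG
  rw [Real.cot_eq_cos_div_sin]
  field_simp at huniq ⊢
  linarith

lemma sum_reflect (q : ℕ) (F : ℕ → ℝ) :
    ∑ k ∈ Finset.Icc 1 (q - 1), F k = ∑ k ∈ Finset.Icc 1 (q - 1), F (q - k) := by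
  refine Finset.sum_nbij' (fun k => q - k) (fun k => q - k) ?_ ?_ ?_ ?_ ?_
  · intro a ha; simp only [Finset.mem_Icc] at *; omega
  · intro a ha; simp only [Finset.mem_Icc] at *; omega
  · intro a ha; simp only [Finset.mem_Icc] at *; omega
  · intro a ha; simp only [Finset.mem_Icc] at *; omega
  · intro a ha; simp only [Finset.mem_Icc] at *; congr 1; omega

theorem vasyunin_eq_digamma_sum (p : ℤ) (q : ℕ) (hq : 0 < q) (hcop : Int.gcd p q = 1) :
    ∑ k ∈ Finset.Icc 1 (q - 1), Int.fract ((k : ℝ) * p / q) * Real.cot (k * Real.pi / q) =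
      -(2 / Real.pi) * ∑ k ∈ Finset.Icc 1 (q - 1), B1 ((k : ℝ) * p / q) * digamma ((k : ℝ) / q) := by
  have hπ := Real.pi_pos
  have hq0 : (q:ℝ) ≠ 0 := Nat.cast_ne_zero.mpr hq.ne'
  set f : ℕ → ℝ := fun k => Int.fract ((k : ℝ) * p / q) with hf
  set c : ℕ → ℝ := fun k => Real.cot ((k : ℝ) * Real.pi / q) with hcdef
  set d : ℕ → ℝ := fun k => digamma ((k : ℝ) / q) with hddef
  -- non-integrality
  have hnotint : ∀ k ∈ Finset.Icc 1 (q - 1), ¬∃ m : ℤ, ((k : ℝ) * p / q) = m := by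
    rintro k hk ⟨m, hm⟩
    simp only [Finset.mem_Icc] at hk
    have hkq : k < q := by omega
    have : ((k : ℝ) * p) = m * q := by field_simp at hm; linarith
    have hz : (k : ℤ) * p = m * q := by exact_mod_cast this
    have hdvd : (q : ℤ) ∣ p * (k : ℤ) := ⟨m, by linarith⟩
    have hcop' : Int.gcd (q : ℤ) p = 1 := by rwa [Int.gcd_comm]
    have : (q : ℤ) ∣ (k : ℤ) := Int.dvd_of_dvd_mul_right_of_gcd_one hdvd hcop' 
    have : q ∣ k := Int.ofNat_dvd.mp this
    have := Nat.le_of_dvd (by omega) this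
    omega
  have hfr0 : ∀ k ∈ Finset.Icc 1 (q - 1), Int.fract ((k : ℝ) * p / q) ≠ 0 := by
    intro k hk h0
    refine hnotint k hk ⟨⌊(k : ℝ) * p / q⌋, ?_⟩
    conv_lhs => rw [← Int.floor_add_fract ((k : ℝ) * p / q)]
    rw [h0, add_zero]
  have hB1 : ∀ k ∈ Finset.Icc 1 (q - 1), B1 ((k : ℝ) * p / q) = f k - 1 / 2 := by
    intro k hk
    rw [B1, if_neg (hnotint k hk)]
  -- reflection of fract
  have hfr : ∀ k ∈ Finset.Icc 1 (q - 1), f (q - k) = 1 - f k := by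
    intro k hk
    simp only [Finset.mem_Icc] at hk
    have hkq : k ≤ q := by omega
    have hcast : ((q - k : ℕ) : ℝ) = (q : ℝ) - k := by
      rw [Nat.cast_sub hkq]
    have harg : ((q - k : ℕ) : ℝ) * p / q = (p : ℝ) + -((k : ℝ) * p / q) := by
      rw [hcast]; field_simp; ring
    simp only [hf]
    rw [harg, Int.fract_intCast_add, Int.fract_neg (hfr0 k (by simp only [Finset.mem_Icc]; omega))]
  -- reflection of cot
  have hc : ∀ k ∈ Finset.Icc 1 (q - 1), c (q - k) = -c k := by
    intro k hk
    simp only [Finset.mem_Icc] at hk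
    have hkq : k ≤ q := by omega
    have harg : ((q - k : ℕ) : ℝ) * Real.pi / q = Real.pi - (k : ℝ) * Real.pi / q := by
      rw [Nat.cast_sub hkq]; field_simp
    simp only [hcdef]
    rw [harg, Real.cot_eq_cos_div_sin, Real.cot_eq_cos_div_sin, Real.cos_pi_sub,
      Real.sin_pi_sub]
    ring
  -- reflection of digamma
  have hd : ∀ k ∈ Finset.Icc 1 (q - 1), d (q - k) = d k + Real.pi * c k := by
    intro k hk
    simp only [Finset.mem_Icc] at hk
    have hkq : k < q := by omega
    have hx0 : 0 < (k : ℝ) / q := by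
      apply div_pos _ (by positivity)
      exact_mod_cast Nat.lt_of_lt_of_le Nat.zero_lt_one hk.1
    have hx1 : (k : ℝ) / q < 1 := by
      rw [div_lt_one (by positivity)]
      exact_mod_cast hkq
    have harg : ((q - k : ℕ) : ℝ) / q = 1 - (k : ℝ) / q := by
      rw [Nat.cast_sub hkq.le]; field_simp
    have harg2 : Real.pi * ((k : ℝ) / q) = (k : ℝ) * Real.pi / q := by ring
    simp only [hddef, hcdef]
    rw [harg, digamma_reflect hx0 hx1, harg2]
  -- the three sums
  set T := ∑ k ∈ Finset.Icc 1 (q - 1), f k * c k with hT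
  set C := ∑ k ∈ Finset.Icc 1 (q - 1), c k with hC
  set D := ∑ k ∈ Finset.Icc 1 (q - 1), (f k - 1 / 2) * d k with hD
  have hC0 : C = 0 := by
    have h2 : ∑ k ∈ Finset.Icc 1 (q - 1), c k = -∑ k ∈ Finset.Icc 1 (q - 1), c k := by
      conv_lhs => rw [sum_reflect q c]
      rw [Finset.sum_congr rfl hc, Finset.sum_neg_distrib]
    rw [hC]
    linarith
  have hD2 : 2 * D = -(Real.pi * T) := by
    have h1 : D = ∑ k ∈ Finset.Icc 1 (q - 1), (f (q - k) - 1 / 2) * d (q - k) :=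
      sum_reflect q (fun k => (f k - 1 / 2) * d k)
    have h2 : D = ∑ k ∈ Finset.Icc 1 (q - 1),
        (-((f k - 1 / 2) * d k) + (Real.pi / 2 * c k - Real.pi * (f k * c k))) := by
      rw [h1]
      refine Finset.sum_congr rfl fun k hk => ?_
      rw [hfr k hk, hd k hk]
      ring
    rw [Finset.sum_add_distrib, Finset.sum_neg_distrib, Finset.sum_sub_distrib,
      ← Finset.mul_sum, ← Finset.mul_sum, ← hC, ← hT, ← hD, hC0] at h2
    linarith
  rw [Finset.sum_congr rfl (fun k hk => by rw [hB1 k hk]), ← hD]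
  field_simp
  linarith
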